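/- For every quantum channel Φ, the trace norm contraction coefficient satisfies η_tr(Φ) = sup { (1/2)‖Φ(ρ) − Φ(σ)‖₁ : ρ, σ density matrices with orthogonal supports (ρσ = 0) }, and moreover this supremum is already attained over pure states: η_tr(Φ) = sup { (1/2)‖Φ(uuᴴ) − Φ(vvᴴ)‖₁ : u, v unit vectors in ℂ^{d_A} with ⟨u,v⟩ = 0 }. -/

import Mathlib

open Matrix Kronecker BigOperators
open scoped ComplexOrder

noncomputable section

/-- The positive semidefinite square root of a positive semidefinite matrix
(the definition `Matrix.PosSemidef.sqrt` of the older Mathlib, since removed). -/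
def Matrix.PosSemidef.sqrt {n : Type*} [Fintype n] {𝕜 : Type*} [RCLike 𝕜] [DecidableEq n]
    {A : Matrix n n 𝕜} (hA : A.PosSemidef) : Matrix n n 𝕜 :=
  hA.1.eigenvectorUnitary.1 * diagonal ((↑) ∘ (√·) ∘ hA.1.eigenvalues) *
  (star hA.1.eigenvectorUnitary : Matrix n n 𝕜)

/-- The trace norm (sum of singular values) of a complex matrix: `tr √(AᴴA)`. -/
def traceNorm {m n : Type*} [Fintype m] [Fintype n] [DecidableEq n] (A : Matrix m n ℂ) : ℝ :=
  ((Matrix.posSemidef_conjTranspose_mul_self A).sqrt).trace.re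

/-- A density matrix: positive semidefinite with trace one. -/
def IsDensity {n : Type*} [Fintype n] [DecidableEq n] (ρ : Matrix n n ℂ) : Prop :=
  ρ.PosSemidef ∧ ρ.trace = 1

/-- Trace norm contraction coefficient of a map on matrices. -/
def etaTr {dA dB : ℕ} (Φ : Matrix (Fin dA) (Fin dA) ℂ → Matrix (Fin dB) (Fin dB) ℂ) : ℝ :=
  sSup {r : ℝ | ∃ ρ σ : Matrix (Fin dA) (Fin dA) ℂ, IsDensity ρ ∧ IsDensity σ ∧ ρ ≠ σ ∧
    r = traceNorm (Φ ρ - Φ σ) / traceNorm (ρ - σ)}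

/-- Optimal success probability for transmitting one of `k` messages through `Φ`. -/
def Psucc {dA dB : ℕ} (Φ : Matrix (Fin dA) (Fin dA) ℂ → Matrix (Fin dB) (Fin dB) ℂ)
    (k : ℕ) : ℝ :=
  sSup {r : ℝ | ∃ (M : Fin k → Matrix (Fin dB) (Fin dB) ℂ)
      (ρ : Fin k → Matrix (Fin dA) (Fin dA) ℂ),
    (∀ i, (M i).PosSemidef) ∧ (∑ i, M i = 1) ∧ (∀ i, IsDensity (ρ i)) ∧
    r = (1 / (k : ℝ)) * ∑ i, ((M i * Φ (ρ i)).trace).re}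

/-- The Euclidean (ℓ₂) norm of a complex vector. -/
def l2norm {n : Type*} [Fintype n] (v : n → ℂ) : ℝ :=
  Real.sqrt (∑ i, ‖v i‖ ^ 2)

/-- Choi state of a map on matrices: `(1/dA) ∑ᵢⱼ Eᵢⱼ ⊗ Φ(Eᵢⱼ)`. -/
def choi {dA dB : ℕ} (Φ : Matrix (Fin dA) (Fin dA) ℂ → Matrix (Fin dB) (Fin dB) ℂ) :
    Matrix (Fin dA × Fin dB) (Fin dA × Fin dB) ℂ :=
  (dA : ℂ)⁻¹ • ∑ i : Fin dA, ∑ j : Fin dA,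
    (Matrix.single i j (1 : ℂ)) ⊗ₖ (Φ (Matrix.single i j (1 : ℂ)))

set_option linter.unusedSectionVars false

section SqrtPort
open scoped MatrixOrder

namespace Matrix.PosSemidef
variable {n : Type*} [Fintype n] [DecidableEq n]

lemma sqrt_eq_cfcSqrt {A : Matrix n n ℂ} (hA : A.PosSemidef) : hA.sqrt = CFC.sqrt A := by
  rw [CFC.sqrt_eq_cfc, cfc_nnreal_eq_real _ A, hA.1.cfc_eq]
  simp only [IsHermitian.cfc, Unitary.conjStarAlgAut_apply, Matrix.PosSemidef.sqrt]
  congr 3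
  funext i
  simp [Real.coe_sqrt, Real.coe_toNNReal', max_eq_left (hA.eigenvalues_nonneg i)]

lemma posSemidef_sqrt {A : Matrix n n ℂ} (hA : A.PosSemidef) : hA.sqrt.PosSemidef := by
  rw [hA.sqrt_eq_cfcSqrt]; exact (CFC.sqrt_nonneg A).posSemidef

lemma sqrt_mul_self {A : Matrix n n ℂ} (hA : A.PosSemidef) : hA.sqrt * hA.sqrt = A := by
  rw [hA.sqrt_eq_cfcSqrt]; exact CFC.sqrt_mul_sqrt_self A hA.nonneg

lemma sq_sqrt {A : Matrix n n ℂ} (hA : A.PosSemidef) : hA.sqrt ^ 2 = A := by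
  rw [hA.sqrt_eq_cfcSqrt]; exact CFC.sq_sqrt A hA.nonneg

lemma eq_sqrt_of_sq_eq {A : Matrix n n ℂ} (hA : A.PosSemidef) {B : Matrix n n ℂ}
    (hB : B.PosSemidef) (hAB : A ^ 2 = B) : A = hB.sqrt := by
  rw [hB.sqrt_eq_cfcSqrt]
  exact (CFC.sqrt_unique (by rw [← sq]; exact hAB) hA.nonneg).symm

end Matrix.PosSemidef
end SqrtPort

namespace Aux
variable {n : Type*} [Fintype n] [DecidableEq n]

lemma trace_conj {U : Matrix n n ℂ} (hU : Uᴴ * U = 1) (D : Matrix n n ℂ) :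
    (U * D * Uᴴ).trace = D.trace := by
  rw [Matrix.trace_mul_cycle, hU, Matrix.one_mul]

lemma conj_mul_conj {U : Matrix n n ℂ} (hU : Uᴴ * U = 1) (D E : Matrix n n ℂ) :
    (U * D * Uᴴ) * (U * E * Uᴴ) = U * (D * E) * Uᴴ := by
  have : U * D * Uᴴ * (U * E * Uᴴ) = U * D * (Uᴴ * U) * E * Uᴴ := by
    simp only [Matrix.mul_assoc]
  rw [this, hU, Matrix.mul_one]
  simp only [Matrix.mul_assoc]

lemma mul_diagonal_conjTranspose (M : Matrix n n ℂ) (d : n → ℂ) :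
    M * Matrix.diagonal d * Mᴴ
      = ∑ i, d i • Matrix.vecMulVec (fun k => M k i) (star fun k => M k i) := by
  ext a b
  rw [Matrix.mul_apply]
  rw [Matrix.sum_apply]
  simp only [Matrix.mul_diagonal, Matrix.conjTranspose_apply, Matrix.smul_apply,
    Matrix.vecMulVec_apply, Pi.star_apply, smul_eq_mul]
  exact Finset.sum_congr rfl fun j _ => by ring

lemma traceNorm_hermitian {A : Matrix n n ℂ} (hA : A.IsHermitian) :
    traceNorm A = ∑ i, |hA.eigenvalues i| := by
  set U : Matrix n n ℂ := (hA.eigenvectorUnitary : Matrix n n ℂ) with hUdef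
  have hU : Uᴴ * U = 1 := by
    simpa [Matrix.star_eq_conjTranspose] using
      (Matrix.mem_unitaryGroup_iff'.mp hA.eigenvectorUnitary.2)
  have hspec : A = U * Matrix.diagonal (Complex.ofReal ∘ hA.eigenvalues) * Uᴴ := by
    simpa [Matrix.star_eq_conjTranspose] using hA.spectral_theorem
  set S : Matrix n n ℂ := U * Matrix.diagonal (Complex.ofReal ∘ fun i => |hA.eigenvalues i|) * Uᴴ
    with hSdef
  have hSpsd : S.PosSemidef := by
    have hd : Matrix.PosSemidef
        (Matrix.diagonal (Complex.ofReal ∘ fun i => |hA.eigenvalues i|) : Matrix n n ℂ) := by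
      refine Matrix.posSemidef_diagonal_iff.mpr fun i => ?_
      simp [Complex.zero_le_real, abs_nonneg]
    simpa [Matrix.star_eq_conjTranspose] using hd.mul_mul_conjTranspose_same U
  have hcast : ∀ f : n → ℝ, (fun i => (Complex.ofReal ∘ f) i * (Complex.ofReal ∘ f) i)
      = fun i => ((f i * f i : ℝ) : ℂ) :=
    fun f => funext fun i => (Complex.ofReal_mul _ _).symm
  have hsq : S ^ 2 = Aᴴ * A := by
    have h1 : S ^ 2 = U * Matrix.diagonal
        (fun i => ((|hA.eigenvalues i| * |hA.eigenvalues i| : ℝ) : ℂ)) * Uᴴ := by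
      rw [pow_two, hSdef, conj_mul_conj hU, Matrix.diagonal_mul_diagonal, hcast]
    have h2 : Aᴴ * A = U * Matrix.diagonal
        (fun i => ((hA.eigenvalues i * hA.eigenvalues i : ℝ) : ℂ)) * Uᴴ := by
      rw [hA.eq]
      conv_lhs => rw [hspec]
      rw [conj_mul_conj hU, Matrix.diagonal_mul_diagonal, hcast]
    have h3 : (fun i => ((|hA.eigenvalues i| * |hA.eigenvalues i| : ℝ) : ℂ))
        = fun i => ((hA.eigenvalues i * hA.eigenvalues i : ℝ) : ℂ) := by
      funext i; rw [abs_mul_abs_self]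
    rw [h1, h2, h3]
  have := hSpsd.eq_sqrt_of_sq_eq (Matrix.posSemidef_conjTranspose_mul_self A) hsq
  rw [traceNorm, ← this, hSdef, trace_conj hU, Matrix.trace_diagonal]
  simp [Complex.re_sum]


lemma psd_trace_re_nonneg {A : Matrix n n ℂ} (hA : A.PosSemidef) : 0 ≤ A.trace.re := by
  rw [Matrix.trace]
  simp only [Complex.re_sum]
  refine Finset.sum_nonneg fun i _ => ?_
  have := hA.dotProduct_mulVec_nonneg (Pi.single i 1)
  have h : (star (Pi.single i 1) ⬝ᵥ A *ᵥ Pi.single i 1 : ℂ) = A i i := by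
    simp [Matrix.mulVec_single, dotProduct, Pi.single_apply, Finset.sum_ite_eq']
  rw [h] at this
  exact (Complex.le_def.mp this).1

lemma traceNorm_nonneg (A : Matrix n n ℂ) : 0 ≤ traceNorm A :=
  psd_trace_re_nonneg (Matrix.posSemidef_conjTranspose_mul_self A).posSemidef_sqrt

lemma traceNorm_psd {A : Matrix n n ℂ} (hA : A.PosSemidef) : traceNorm A = A.trace.re := by
  have h : A ^ 2 = Aᴴ * A := by rw [hA.isHermitian.eq, pow_two]
  have := hA.eq_sqrt_of_sq_eq (Matrix.posSemidef_conjTranspose_mul_self A) h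
  rw [traceNorm, ← this]

lemma posSemidef_smul {A : Matrix n n ℂ} (hA : A.PosSemidef) {c : ℝ} (hc : 0 ≤ c) :
    ((c : ℂ) • A).PosSemidef := by
  constructor
  · unfold Matrix.IsHermitian
    rw [Matrix.conjTranspose_smul, hA.1.eq]
    congr 1
    simp [Complex.star_def, Complex.conj_ofReal]
  · intro x
    exact (hA.smul (Complex.zero_le_real.mpr hc)).2 x

lemma posSemidef_sum {ι : Type*} (s : Finset ι) (f : ι → Matrix n n ℂ)
    (h : ∀ i ∈ s, (f i).PosSemidef) : (∑ i ∈ s, f i).PosSemidef :=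
  Finset.sum_induction f _ (fun _ _ ha hb => ha.add hb) Matrix.PosSemidef.zero h

lemma trace_mul_psd_nonneg {P Q : Matrix n n ℂ} (hP : P.PosSemidef) (hQ : Q.PosSemidef) :
    0 ≤ (P * Q).trace.re := by
  have h2 : (P * Q).trace = (hP.sqrt * Q * hP.sqrtᴴ).trace := by
    conv_lhs => rw [← hP.sqrt_mul_self]
    rw [Matrix.mul_assoc, Matrix.trace_mul_comm, hP.posSemidef_sqrt.1.eq]
  rw [h2]
  exact psd_trace_re_nonneg (hQ.mul_mul_conjTranspose_same hP.sqrt)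

lemma traceNorm_sub_le {P N : Matrix n n ℂ} (hP : P.PosSemidef) (hN : N.PosSemidef) :
    traceNorm (P - N) ≤ P.trace.re + N.trace.re := by
  set A := P - N with hAdef
  have hA : A.IsHermitian := hP.1.sub hN.1
  set U : Matrix n n ℂ := (hA.eigenvectorUnitary : Matrix n n ℂ) with hUdef
  have hU : Uᴴ * U = 1 := by
    simpa [Matrix.star_eq_conjTranspose] using
      (Matrix.mem_unitaryGroup_iff'.mp hA.eigenvectorUnitary.2)
  have hUU : U * Uᴴ = 1 := by
    simpa [Matrix.star_eq_conjTranspose] using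
      (Matrix.mem_unitaryGroup_iff.mp hA.eigenvectorUnitary.2)
  have hspec : A = U * Matrix.diagonal (Complex.ofReal ∘ hA.eigenvalues) * Uᴴ := by
    simpa [Matrix.star_eq_conjTranspose] using hA.spectral_theorem
  set w : n → ℝ := fun i => if 0 ≤ hA.eigenvalues i then 1 else -1 with hwdef
  set W : Matrix n n ℂ := U * Matrix.diagonal (Complex.ofReal ∘ w) * Uᴴ with hWdef
  -- 1 - W and 1 + W are PSD
  have hconjpsd : ∀ g : n → ℝ, (∀ i, 0 ≤ g i) →
      (U * Matrix.diagonal (Complex.ofReal ∘ g) * Uᴴ).PosSemidef := by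
    intro g hg
    have hd : (Matrix.diagonal (Complex.ofReal ∘ g) : Matrix n n ℂ).PosSemidef :=
      Matrix.posSemidef_diagonal_iff.mpr fun i => by
        simpa using Complex.zero_le_real.mpr (hg i)
    simpa [Matrix.star_eq_conjTranspose] using hd.mul_mul_conjTranspose_same U
  have hone : ∀ c : ℝ, (1 : Matrix n n ℂ) + (c : ℂ) • W
      = U * Matrix.diagonal (Complex.ofReal ∘ fun i => 1 + c * w i) * Uᴴ := by
    intro c
    have : Matrix.diagonal (Complex.ofReal ∘ fun i => 1 + c * w i)
        = (1 : Matrix n n ℂ) + (c : ℂ) • Matrix.diagonal (Complex.ofReal ∘ w) := by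
      ext i j
      by_cases h : i = j
      · subst h
        simp [Matrix.diagonal_apply_eq, Matrix.one_apply_eq, Complex.ofReal_add,
          Complex.ofReal_mul]
      · simp [Matrix.diagonal_apply_ne _ h, Matrix.one_apply_ne h]
    rw [this, Matrix.mul_add, Matrix.add_mul, Matrix.mul_one, hUU, Matrix.mul_smul,
      Matrix.smul_mul, hWdef]
  have h1W : ((1 : Matrix n n ℂ) - W).PosSemidef := by
    have := hone (-1)
    have h2 : (1 : Matrix n n ℂ) - W = 1 + ((-1 : ℝ) : ℂ) • W := by
      push_cast; rw [neg_one_smul]; rw [sub_eq_add_neg]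
    rw [h2, this]
    refine hconjpsd _ fun i => ?_
    rcases le_or_gt 0 (hA.eigenvalues i) with h | h
    · simp [hwdef, h]
    · simp [hwdef, not_le.mpr h]
  have h2W : ((1 : Matrix n n ℂ) + W).PosSemidef := by
    have := hone 1
    have h2 : (1 : Matrix n n ℂ) + W = 1 + ((1 : ℝ) : ℂ) • W := by push_cast; rw [one_smul]
    rw [h2, this]
    refine hconjpsd _ fun i => ?_
    rcases le_or_gt 0 (hA.eigenvalues i) with h | h
    · simp [hwdef, h]
    · simp [hwdef, not_le.mpr h]
  -- trace (W * A) = traceNorm A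
  have htrWA : (W * A).trace.re = traceNorm A := by
    rw [traceNorm_hermitian hA, hWdef]
    conv_lhs => rw [hspec]
    rw [conj_mul_conj hU, Matrix.diagonal_mul_diagonal, trace_conj hU, Matrix.trace_diagonal]
    rw [Complex.re_sum]
    refine Finset.sum_congr rfl fun i _ => ?_
    simp only [Function.comp_apply, ← Complex.ofReal_mul, Complex.ofReal_re]
    rcases le_or_gt 0 (hA.eigenvalues i) with h | h
    · simp [hwdef, h, abs_of_nonneg h]
    · simp [hwdef, not_le.mpr h, abs_of_neg h]
  -- bound
  have hWP : (W * P).trace.re ≤ P.trace.re := by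
    have h0 : 0 ≤ (((1 : Matrix n n ℂ) - W) * P).trace.re := trace_mul_psd_nonneg h1W hP
    have : (((1 : Matrix n n ℂ) - W) * P).trace = P.trace - (W * P).trace := by
      rw [Matrix.sub_mul, Matrix.one_mul, Matrix.trace_sub]
    rw [this, Complex.sub_re] at h0
    linarith
  have hWN : -(W * N).trace.re ≤ N.trace.re := by
    have h0 : 0 ≤ (((1 : Matrix n n ℂ) + W) * N).trace.re := trace_mul_psd_nonneg h2W hN
    have : (((1 : Matrix n n ℂ) + W) * N).trace = N.trace + (W * N).trace := by
      rw [Matrix.add_mul, Matrix.one_mul, Matrix.trace_add]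
    rw [this, Complex.add_re] at h0
    linarith
  have hsplit : (W * A).trace.re = (W * P).trace.re - (W * N).trace.re := by
    rw [hAdef, Matrix.mul_sub, Matrix.trace_sub, Complex.sub_re]
  linarith [htrWA, hsplit, hWP, hWN]

lemma jordan {A : Matrix n n ℂ} (hA : A.IsHermitian) :
    ∃ P N : Matrix n n ℂ, P.PosSemidef ∧ N.PosSemidef ∧ A = P - N ∧ P * N = 0 ∧
      traceNorm A = P.trace.re + N.trace.re := by
  set U : Matrix n n ℂ := (hA.eigenvectorUnitary : Matrix n n ℂ) with hUdef
  have hU : Uᴴ * U = 1 := by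
    simpa [Matrix.star_eq_conjTranspose] using
      (Matrix.mem_unitaryGroup_iff'.mp hA.eigenvectorUnitary.2)
  have hspec : A = U * Matrix.diagonal (Complex.ofReal ∘ hA.eigenvalues) * Uᴴ := by
    simpa [Matrix.star_eq_conjTranspose] using hA.spectral_theorem
  have hconjpsd : ∀ g : n → ℝ, (∀ i, 0 ≤ g i) →
      (U * Matrix.diagonal (Complex.ofReal ∘ g) * Uᴴ).PosSemidef := by
    intro g hg
    have hd : (Matrix.diagonal (Complex.ofReal ∘ g) : Matrix n n ℂ).PosSemidef :=
      Matrix.posSemidef_diagonal_iff.mpr fun i => by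
        simpa using Complex.zero_le_real.mpr (hg i)
    simpa [Matrix.star_eq_conjTranspose] using hd.mul_mul_conjTranspose_same U
  refine ⟨U * Matrix.diagonal (Complex.ofReal ∘ fun i => max (hA.eigenvalues i) 0) * Uᴴ,
    U * Matrix.diagonal (Complex.ofReal ∘ fun i => max (-hA.eigenvalues i) 0) * Uᴴ,
    hconjpsd _ fun i => le_max_right _ _, hconjpsd _ fun i => le_max_right _ _, ?_, ?_, ?_⟩
  · have key : U * Matrix.diagonal (Complex.ofReal ∘ fun i => max (hA.eigenvalues i) 0) * Uᴴ
        - U * Matrix.diagonal (Complex.ofReal ∘ fun i => max (-hA.eigenvalues i) 0) * Uᴴ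
        = U * Matrix.diagonal (Complex.ofReal ∘ hA.eigenvalues) * Uᴴ := by
      rw [← Matrix.sub_mul, ← Matrix.mul_sub, Matrix.diagonal_sub]
      have hfun : (fun i => (Complex.ofReal ∘ fun i => max (hA.eigenvalues i) 0) i
          - (Complex.ofReal ∘ fun i => max (-hA.eigenvalues i) 0) i)
          = Complex.ofReal ∘ hA.eigenvalues := by
        funext i
        simp only [Function.comp_apply, ← Complex.ofReal_sub]
        congr 1
        rcases le_total 0 (hA.eigenvalues i) with h | h
        · rw [max_eq_left h, max_eq_right (neg_nonpos.mpr h)]; ring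
        · rw [max_eq_right h, max_eq_left (neg_nonneg.mpr h)]; ring
      rw [hfun]
    rw [key]
    exact hspec
  · rw [conj_mul_conj hU, Matrix.diagonal_mul_diagonal]
    have : (fun i => (Complex.ofReal ∘ fun i => max (hA.eigenvalues i) 0) i *
        (Complex.ofReal ∘ fun i => max (-hA.eigenvalues i) 0) i) = fun _ => (0 : ℂ) := by
      funext i
      simp only [Function.comp_apply, ← Complex.ofReal_mul]
      rcases le_total 0 (hA.eigenvalues i) with h | h
      · rw [max_eq_right (neg_nonpos.mpr h)]; simp
      · rw [max_eq_right h]; simp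
    rw [this]
    simp
  · rw [traceNorm_hermitian hA, trace_conj hU, trace_conj hU, Matrix.trace_diagonal,
      Matrix.trace_diagonal, Complex.re_sum, Complex.re_sum, ← Finset.sum_add_distrib]
    refine Finset.sum_congr rfl fun i _ => ?_
    simp only [Function.comp_apply, Complex.ofReal_re]
    rcases le_total 0 (hA.eigenvalues i) with h | h
    · rw [abs_of_nonneg h, max_eq_left h, max_eq_right (neg_nonpos.mpr h)]; ring
    · rw [abs_of_nonpos h, max_eq_right h, max_eq_left (neg_nonneg.mpr h)]; ring

lemma traceNorm_sub_of_mul_eq_zero {P N : Matrix n n ℂ} (hP : P.PosSemidef)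
    (hN : N.PosSemidef) (h : P * N = 0) :
    traceNorm (P - N) = P.trace.re + N.trace.re := by
  have hNP : N * P = 0 := by
    have := congrArg Matrix.conjTranspose h
    rwa [Matrix.conjTranspose_mul, hN.1.eq, hP.1.eq, Matrix.conjTranspose_zero] at this
  have hsq : (P + N) ^ 2 = (P - N)ᴴ * (P - N) := by
    have hherm : (P - N)ᴴ = P - N := (hP.1.sub hN.1).eq
    rw [hherm]
    rw [pow_two, Matrix.add_mul, Matrix.mul_add, Matrix.mul_add, Matrix.sub_mul,
      Matrix.mul_sub, Matrix.mul_sub, h, hNP]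
    noncomm_ring
  have := (hP.add hN).eq_sqrt_of_sq_eq (Matrix.posSemidef_conjTranspose_mul_self (P - N)) hsq
  rw [traceNorm, ← this, Matrix.trace_add, Complex.add_re]

lemma traceNorm_smul (A : Matrix n n ℂ) {c : ℝ} (hc : 0 ≤ c) :
    traceNorm ((c : ℂ) • A) = c * traceNorm A := by
  set S := (Matrix.posSemidef_conjTranspose_mul_self A).sqrt with hS
  have hSpsd := (Matrix.posSemidef_conjTranspose_mul_self A).posSemidef_sqrt
  have hsq : ((c : ℂ) • S) ^ 2 = ((c : ℂ) • A)ᴴ * ((c : ℂ) • A) := by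
    rw [Matrix.conjTranspose_smul, Matrix.mul_smul, Matrix.smul_mul, smul_pow,
      (Matrix.posSemidef_conjTranspose_mul_self A).sq_sqrt, smul_smul]
    congr 1
    simp [Complex.star_def, Complex.conj_ofReal, pow_two]
  have := (posSemidef_smul hSpsd hc).eq_sqrt_of_sq_eq
    (Matrix.posSemidef_conjTranspose_mul_self ((c : ℂ) • A)) hsq
  rw [traceNorm, ← this, Matrix.trace_smul, smul_eq_mul, Complex.re_ofReal_mul]
  rfl

lemma traceNorm_pos {A : Matrix n n ℂ} (hA : A.IsHermitian) (h : A ≠ 0) :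
    0 < traceNorm A := by
  rcases lt_or_eq_of_le (traceNorm_nonneg A) with h' | h'
  · exact h'
  exfalso
  apply h
  have hsum : ∑ i, |hA.eigenvalues i| = 0 := by rw [← traceNorm_hermitian hA, ← h']
  have hzero : ∀ i, hA.eigenvalues i = 0 := by
    intro i
    have := (Finset.sum_eq_zero_iff_of_nonneg (fun i _ => abs_nonneg _)).mp hsum i
      (Finset.mem_univ i)
    exact abs_eq_zero.mp this
  have hspec : A = (hA.eigenvectorUnitary : Matrix n n ℂ)
      * Matrix.diagonal (Complex.ofReal ∘ hA.eigenvalues)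
      * (hA.eigenvectorUnitary : Matrix n n ℂ)ᴴ := by
    simpa [Matrix.star_eq_conjTranspose] using hA.spectral_theorem
  rw [hspec]
  have : Matrix.diagonal (Complex.ofReal ∘ hA.eigenvalues) = (0 : Matrix n n ℂ) := by
    ext i j
    rcases eq_or_ne i j with rfl | hij
    · simp [hzero i]
    · simp [Matrix.diagonal_apply_ne _ hij]
  rw [this, Matrix.mul_zero, Matrix.zero_mul]

lemma traceNorm_sum_smul_le {ι : Type*} [Fintype ι] (c : ι → ℝ) (f : ι → Matrix n n ℂ)
    (hc : ∀ i, 0 ≤ c i) (hf : ∀ i, (f i).IsHermitian) :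
    traceNorm (∑ i, (c i : ℂ) • f i) ≤ ∑ i, c i * traceNorm (f i) := by
  have hjord := fun i => jordan (hf i)
  choose P N hP hN hPN hmul htn using hjord
  have hsplit : (∑ i, (c i : ℂ) • f i)
      = (∑ i, (c i : ℂ) • P i) - (∑ i, (c i : ℂ) • N i) := by
    rw [← Finset.sum_sub_distrib]
    refine Finset.sum_congr rfl fun i _ => ?_
    rw [← smul_sub, ← hPN i]
  have hPsum : (∑ i, (c i : ℂ) • P i).PosSemidef :=
    posSemidef_sum _ _ fun i _ => posSemidef_smul (hP i) (hc i)
  have hNsum : (∑ i, (c i : ℂ) • N i).PosSemidef :=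
    posSemidef_sum _ _ fun i _ => posSemidef_smul (hN i) (hc i)
  have hle := traceNorm_sub_le hPsum hNsum
  rw [← hsplit] at hle
  refine hle.trans (le_of_eq ?_)
  rw [Matrix.trace_sum, Matrix.trace_sum]
  simp only [Matrix.trace_smul, smul_eq_mul, Complex.re_sum, Complex.re_ofReal_mul]
  rw [← Finset.sum_add_distrib]
  exact Finset.sum_congr rfl fun i _ => by rw [htn i]; ring

lemma psd_vecMulVec (u : n → ℂ) : (Matrix.vecMulVec u (star u)).PosSemidef := by
  constructor
  · unfold Matrix.IsHermitian
    ext i j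
    simp only [Matrix.conjTranspose_apply, Matrix.vecMulVec_apply, Pi.star_apply,
      star_mul', star_star]
    ring
  · intro x
    exact (Matrix.posSemidef_vecMulVec_self_star u).2 x

lemma trace_vecMulVec {u : n → ℂ} (hu : l2norm u = 1) :
    (Matrix.vecMulVec u (star u)).trace = 1 := by
  have h1 : ∑ i, ‖u i‖ ^ 2 = 1 := by
    have h := hu
    rw [l2norm] at h
    exact Real.sqrt_eq_one.mp h
  have : (Matrix.vecMulVec u (star u)).trace = ((∑ i, ‖u i‖ ^ 2 : ℝ) : ℂ) := by
    rw [Matrix.trace]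
    push_cast
    refine Finset.sum_congr rfl fun i _ => ?_
    simp only [Matrix.diag_apply, Matrix.vecMulVec_apply, Pi.star_apply]
    rw [Complex.star_def, Complex.mul_conj, Complex.normSq_eq_norm_sq]
    norm_cast
  rw [this, h1, Complex.ofReal_one]

lemma vecMulVec_mul_vecMulVec_eq_zero {u v : n → ℂ} (h : star u ⬝ᵥ v = 0) :
    Matrix.vecMulVec u (star u) * Matrix.vecMulVec v (star v) = 0 := by
  ext a b
  rw [Matrix.mul_apply]
  have key : ∀ k, Matrix.vecMulVec u (star u) a k * Matrix.vecMulVec v (star v) k b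
      = (u a * star (v b)) * (star (u k) * v k) := by
    intro k
    simp only [Matrix.vecMulVec_apply, Pi.star_apply]
    ring
  simp only [key]
  rw [← Finset.mul_sum]
  have : ∑ k, star (u k) * v k = star u ⬝ᵥ v := rfl
  rw [this, h, mul_zero]
  rfl

end Aux

/-- the contraction coefficient is attained on orthogonal density matrices,
and moreover on orthogonal pure states. -/
theorem etaTr_eq_sup_orthogonal {dA dB : ℕ} {ι : Type} [Fintype ι]
    (K : ι → Matrix (Fin dB) (Fin dA) ℂ)
    (hK : ∑ i, (K i)ᴴ * K i = 1)
    (Φ : Matrix (Fin dA) (Fin dA) ℂ → Matrix (Fin dB) (Fin dB) ℂ)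
    (hΦ : ∀ x, Φ x = ∑ i, K i * x * (K i)ᴴ) :
    etaTr Φ = sSup {r : ℝ | ∃ ρ σ : Matrix (Fin dA) (Fin dA) ℂ,
        IsDensity ρ ∧ IsDensity σ ∧ ρ * σ = 0 ∧
        r = (1 / 2) * traceNorm (Φ ρ - Φ σ)} ∧
    etaTr Φ = sSup {r : ℝ | ∃ u v : Fin dA → ℂ,
        l2norm u = 1 ∧ l2norm v = 1 ∧ star u ⬝ᵥ v = 0 ∧
        r = (1 / 2) * traceNorm
          (Φ (Matrix.vecMulVec u (star u)) - Φ (Matrix.vecMulVec v (star v)))} := by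
  classical
  set S1 : Set ℝ := {r : ℝ | ∃ ρ σ : Matrix (Fin dA) (Fin dA) ℂ,
      IsDensity ρ ∧ IsDensity σ ∧ ρ * σ = 0 ∧
      r = (1 / 2) * traceNorm (Φ ρ - Φ σ)} with hS1def
  set S2 : Set ℝ := {r : ℝ | ∃ u v : Fin dA → ℂ,
      l2norm u = 1 ∧ l2norm v = 1 ∧ star u ⬝ᵥ v = 0 ∧
      r = (1 / 2) * traceNorm
        (Φ (Matrix.vecMulVec u (star u)) - Φ (Matrix.vecMulVec v (star v)))} with hS2def
  set S0 : Set ℝ := {r : ℝ | ∃ ρ σ : Matrix (Fin dA) (Fin dA) ℂ,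
      IsDensity ρ ∧ IsDensity σ ∧ ρ ≠ σ ∧
      r = traceNorm (Φ ρ - Φ σ) / traceNorm (ρ - σ)} with hS0def
  have hEta : etaTr Φ = sSup S0 := rfl
  -- basic channel facts
  have hΦpsd : ∀ x : Matrix (Fin dA) (Fin dA) ℂ, x.PosSemidef → (Φ x).PosSemidef := by
    intro x hx
    rw [hΦ]
    exact Aux.posSemidef_sum _ _ fun i _ => hx.mul_mul_conjTranspose_same (K i)
  have hΦtr : ∀ x : Matrix (Fin dA) (Fin dA) ℂ, (Φ x).trace = x.trace := by
    intro x
    rw [hΦ, Matrix.trace_sum]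
    have h1 : ∀ i, (K i * x * (K i)ᴴ).trace = ((K i)ᴴ * K i * x).trace := by
      intro i
      rw [Matrix.mul_assoc, Matrix.trace_mul_comm, Matrix.mul_assoc]
      exact Matrix.trace_mul_comm _ _
    rw [Finset.sum_congr rfl fun i _ => h1 i, ← Matrix.trace_sum, ← Finset.sum_mul, hK,
      Matrix.one_mul]
  have hΦsub : ∀ x y : Matrix (Fin dA) (Fin dA) ℂ,
      Φ x - Φ y = ∑ i, K i * (x - y) * (K i)ᴴ := by
    intro x y
    rw [hΦ, hΦ, ← Finset.sum_sub_distrib]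
    exact Finset.sum_congr rfl fun i _ => by rw [Matrix.mul_sub, Matrix.sub_mul]
  -- contraction
  have hcontr : ∀ ρ σ : Matrix (Fin dA) (Fin dA) ℂ, IsDensity ρ → IsDensity σ →
      traceNorm (Φ ρ - Φ σ) ≤ traceNorm (ρ - σ) := by
    intro ρ σ hρ hσ
    obtain ⟨P, N, hP, hN, hPN, hmul, htn⟩ := Aux.jordan (hρ.1.1.sub hσ.1.1)
    have hsplit : Φ ρ - Φ σ = (∑ i, K i * P * (K i)ᴴ) - (∑ i, K i * N * (K i)ᴴ) := by
      rw [hΦsub, ← Finset.sum_sub_distrib]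
      refine Finset.sum_congr rfl fun i _ => ?_
      rw [hPN, Matrix.mul_sub, Matrix.sub_mul]
    have hPsd : (∑ i, K i * P * (K i)ᴴ).PosSemidef :=
      Aux.posSemidef_sum _ _ fun i _ => hP.mul_mul_conjTranspose_same (K i)
    have hNsd : (∑ i, K i * N * (K i)ᴴ).PosSemidef :=
      Aux.posSemidef_sum _ _ fun i _ => hN.mul_mul_conjTranspose_same (K i)
    have hle := Aux.traceNorm_sub_le hPsd hNsd
    rw [← hsplit] at hle
    have htrP : (∑ i, K i * P * (K i)ᴴ).trace = P.trace := by rw [← hΦ]; exact hΦtr P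
    have htrN : (∑ i, K i * N * (K i)ᴴ).trace = N.trace := by rw [← hΦ]; exact hΦtr N
    rw [htrP, htrN] at hle
    rw [htn]
    exact hle
  -- inclusions
  have h21 : S2 ⊆ S1 := by
    rintro r ⟨u, v, hu, hv, huv, rfl⟩
    exact ⟨_, _, ⟨Aux.psd_vecMulVec u, Aux.trace_vecMulVec hu⟩,
      ⟨Aux.psd_vecMulVec v, Aux.trace_vecMulVec hv⟩,
      Aux.vecMulVec_mul_vecMulVec_eq_zero huv, rfl⟩
  have h10 : S1 ⊆ S0 := by
    rintro r ⟨ρ, σ, hρ, hσ, horth, rfl⟩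
    have hne : ρ ≠ σ := by
      intro h
      have h1 : ρ * ρ = 0 := by rw [← h] at horth; exact horth
      have h2 : ρᴴ * ρ = 0 := by rw [hρ.1.1.eq]; exact h1
      have h3 : ρ = 0 := Matrix.conjTranspose_mul_self_eq_zero.mp h2
      have := hρ.2
      rw [h3] at this
      simp at this
    have h2 : traceNorm (ρ - σ) = 2 := by
      rw [Aux.traceNorm_sub_of_mul_eq_zero hρ.1 hσ.1 horth, hρ.2, hσ.2]
      norm_num
    exact ⟨ρ, σ, hρ, hσ, hne, by rw [h2]; ring⟩
  have hb : ∀ r ∈ S0, r ≤ 1 := by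
    rintro r ⟨ρ, σ, hρ, hσ, hne, rfl⟩
    have hpos := Aux.traceNorm_pos (hρ.1.1.sub hσ.1.1) (sub_ne_zero.mpr hne)
    exact div_le_one_of_le₀ (hcontr ρ σ hρ hσ) hpos.le
  -- the main upper bound step
  have hup : ∀ r ∈ S0, ∃ r' ∈ S2, r ≤ r' := by
    rintro r ⟨ρ, σ, hρ, hσ, hne, rfl⟩
    have hΔ : (ρ - σ).IsHermitian := hρ.1.1.sub hσ.1.1
    set U : Matrix (Fin dA) (Fin dA) ℂ := (hΔ.eigenvectorUnitary : Matrix (Fin dA) (Fin dA) ℂ)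
      with hUdef
    have hU : Uᴴ * U = 1 := by
      simpa [Matrix.star_eq_conjTranspose] using
        (Matrix.mem_unitaryGroup_iff'.mp hΔ.eigenvectorUnitary.2)
    have hspec : ρ - σ = U * Matrix.diagonal (Complex.ofReal ∘ hΔ.eigenvalues) * Uᴴ := by
      simpa [Matrix.star_eq_conjTranspose] using hΔ.spectral_theorem
    set lam : Fin dA → ℝ := hΔ.eigenvalues with hlam
    set a : Fin dA → ℝ := fun i => max (lam i) 0 with hadef
    set b : Fin dA → ℝ := fun i => max (-lam i) 0 with hbdef
    set t : ℝ := ∑ i, a i with htdef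
    have ha0 : ∀ i, 0 ≤ a i := fun i => le_max_right _ _
    have hb0 : ∀ i, 0 ≤ b i := fun i => le_max_right _ _
    have hab : ∀ i, a i - b i = lam i := by
      intro i
      rcases le_total 0 (lam i) with h | h
      · rw [hadef, hbdef]
        simp only [max_eq_left h, max_eq_right (neg_nonpos.mpr h)]
        ring
      · rw [hadef, hbdef]
        simp only [max_eq_right h, max_eq_left (neg_nonneg.mpr h)]
        ring
    have habs : ∀ i, a i + b i = |lam i| := by
      intro i
      rcases le_total 0 (lam i) with h | h
      · rw [hadef, hbdef, abs_of_nonneg h]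
        simp only [max_eq_left h, max_eq_right (neg_nonpos.mpr h)]
        ring
      · rw [hadef, hbdef, abs_of_nonpos h]
        simp only [max_eq_right h, max_eq_left (neg_nonneg.mpr h)]
        ring
    have hmulab : ∀ i, a i * b i = 0 := by
      intro i
      rcases le_total 0 (lam i) with h | h
      · rw [hbdef]; simp only [max_eq_right (neg_nonpos.mpr h)]; ring
      · rw [hadef]; simp only [max_eq_right h]; ring
    have hsumlam : ∑ i, lam i = 0 := by
      have htr0 : (ρ - σ).trace = 0 := by
        rw [Matrix.trace_sub, hρ.2, hσ.2, sub_self]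
      have h1 : (ρ - σ).trace = ((∑ i, lam i : ℝ) : ℂ) := by
        rw [hspec, Aux.trace_conj hU, Matrix.trace_diagonal]
        push_cast
        rfl
      rw [h1] at htr0
      exact_mod_cast htr0
    have hsumb : ∑ i, b i = t := by
      have : ∑ i, (a i - b i) = 0 := by
        rw [Finset.sum_congr rfl fun i _ => hab i]
        exact hsumlam
      rw [Finset.sum_sub_distrib] at this
      rw [htdef]
      linarith
    have htdelta : traceNorm (ρ - σ) = 2 * t := by
      rw [Aux.traceNorm_hermitian hΔ]
      have : ∀ i, |hΔ.eigenvalues i| = a i + b i := fun i => (habs i).symm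
      rw [Finset.sum_congr rfl fun i _ => this i, Finset.sum_add_distrib, hsumb]
      rw [htdef]
      ring
    have htpos : 0 < t := by
      have := Aux.traceNorm_pos hΔ (sub_ne_zero.mpr hne)
      rw [htdelta] at this
      linarith
    set w : Fin dA → Fin dA → ℂ := fun i => fun k => U k i with hwdef
    set F : Fin dA → Matrix (Fin dB) (Fin dB) ℂ :=
      fun i => Φ (Matrix.vecMulVec (w i) (star (w i))) with hFdef
    have hFherm : ∀ i, (F i).IsHermitian := fun i => (hΦpsd _ (Aux.psd_vecMulVec _)).1
    have hcol : ∀ i, l2norm (w i) = 1 := by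
      intro i
      have h1 : (Uᴴ * U) i i = ∑ k, star (U k i) * U k i := by
        rw [Matrix.mul_apply]
        exact Finset.sum_congr rfl fun k _ => by rw [Matrix.conjTranspose_apply]
      have h2 : ((∑ k, ‖U k i‖ ^ 2 : ℝ) : ℂ) = 1 := by
        have h3 : ∀ k, star (U k i) * U k i = ((‖U k i‖ ^ 2 : ℝ) : ℂ) := by
          intro k
          rw [mul_comm, Complex.star_def, Complex.mul_conj, Complex.normSq_eq_norm_sq]
        calc ((∑ k, ‖U k i‖ ^ 2 : ℝ) : ℂ) = ∑ k, ((‖U k i‖ ^ 2 : ℝ) : ℂ) := by push_cast; rfl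
          _ = ∑ k, star (U k i) * U k i := Finset.sum_congr rfl fun k _ => (h3 k).symm
          _ = (Uᴴ * U) i i := h1.symm
          _ = 1 := by rw [hU, Matrix.one_apply_eq]
      have h4 : ∑ k, ‖U k i‖ ^ 2 = 1 := by exact_mod_cast h2
      rw [l2norm]
      have : ∑ k, ‖w i k‖ ^ 2 = 1 := h4
      rw [this, Real.sqrt_one]
    have hB : Φ ρ - Φ σ = ∑ i, ((lam i : ℝ) : ℂ) • F i := by
      rw [hΦsub]
      have hdecomp : ρ - σ = ∑ i, ((lam i : ℝ) : ℂ) • Matrix.vecMulVec (w i) (star (w i)) := by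
        conv_lhs => rw [hspec]
        rw [Aux.mul_diagonal_conjTranspose]
        exact Finset.sum_congr rfl fun i _ => rfl
      rw [hdecomp]
      have hpull : ∀ k, K k * (∑ i, ((lam i : ℝ) : ℂ) • Matrix.vecMulVec (w i) (star (w i)))
          * (K k)ᴴ
          = ∑ i, ((lam i : ℝ) : ℂ) • (K k * Matrix.vecMulVec (w i) (star (w i)) * (K k)ᴴ) := by
        intro k
        rw [Matrix.mul_sum, Matrix.sum_mul]
        refine Finset.sum_congr rfl fun i _ => ?_
        rw [Matrix.mul_smul, Matrix.smul_mul]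
      rw [Finset.sum_congr rfl fun k _ => hpull k, Finset.sum_comm]
      refine Finset.sum_congr rfl fun i _ => ?_
      rw [← Finset.smul_sum]
      congr 1
      exact (hΦ _).symm
    have hkey : ((t : ℝ) : ℂ) • (Φ ρ - Φ σ)
        = ∑ p : Fin dA × Fin dA, ((a p.1 * b p.2 : ℝ) : ℂ) • (F p.1 - F p.2) := by
      have hL : ((t : ℝ) : ℂ) • (Φ ρ - Φ σ) = ∑ i, ((t * lam i : ℝ) : ℂ) • F i := by
        rw [hB, Finset.smul_sum]
        refine Finset.sum_congr rfl fun i _ => ?_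
        rw [smul_smul, ← Complex.ofReal_mul]
      rw [hL, Fintype.sum_prod_type]
      have step2 : ∀ i, ∑ j, ((a i * b j : ℝ) : ℂ) • F i = ((a i * t : ℝ) : ℂ) • F i := by
        intro i
        rw [← Finset.sum_smul]
        congr 1
        have : ∑ j, (a i * b j) = a i * t := by rw [← Finset.mul_sum, hsumb]
        exact_mod_cast congrArg (Complex.ofReal) this
      have step3 : ∀ j, ∑ i, ((a i * b j : ℝ) : ℂ) • F j = ((t * b j : ℝ) : ℂ) • F j := by
        intro j
        rw [← Finset.sum_smul]
        congr 1
        have : ∑ i, (a i * b j) = t * b j := by rw [← Finset.sum_mul, htdef]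
        exact_mod_cast congrArg (Complex.ofReal) this
      calc ∑ i, ((t * lam i : ℝ) : ℂ) • F i
          = ∑ i, (((a i * t : ℝ) : ℂ) • F i - ((t * b i : ℝ) : ℂ) • F i) := by
            refine Finset.sum_congr rfl fun i _ => ?_
            rw [← sub_smul]
            congr 1
            have : a i * t - t * b i = t * lam i := by rw [← hab i]; ring
            rw [← this]
            push_cast
            ring
        _ = (∑ i, ((a i * t : ℝ) : ℂ) • F i) - ∑ j, ((t * b j : ℝ) : ℂ) • F j := by
            rw [Finset.sum_sub_distrib]
        _ = (∑ i, ∑ j, ((a i * b j : ℝ) : ℂ) • F i)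
            - ∑ j, ∑ i, ((a i * b j : ℝ) : ℂ) • F j := by
            rw [Finset.sum_congr rfl fun i _ => (step2 i).symm,
              Finset.sum_congr rfl fun j _ => (step3 j).symm]
        _ = ∑ i, ∑ j, (((a i * b j : ℝ) : ℂ) • F i - ((a i * b j : ℝ) : ℂ) • F j) := by
            rw [show (∑ j, ∑ i, ((a i * b j : ℝ) : ℂ) • F j)
              = ∑ i, ∑ j, ((a i * b j : ℝ) : ℂ) • F j from Finset.sum_comm]
            rw [← Finset.sum_sub_distrib]
            refine Finset.sum_congr rfl fun i _ => ?_
            rw [← Finset.sum_sub_distrib]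
        _ = ∑ i, ∑ j, ((a i * b j : ℝ) : ℂ) • (F i - F j) := by
            refine Finset.sum_congr rfl fun i _ => Finset.sum_congr rfl fun j _ => ?_
            rw [smul_sub]
    set g : Fin dA × Fin dA → ℝ := fun p => traceNorm (F p.1 - F p.2) with hgdef
    have hnorm2 : traceNorm (∑ p : Fin dA × Fin dA, ((a p.1 * b p.2 : ℝ) : ℂ) • (F p.1 - F p.2))
        ≤ ∑ p : Fin dA × Fin dA, (a p.1 * b p.2) * g p :=
      Aux.traceNorm_sum_smul_le _ _ (fun p => mul_nonneg (ha0 _) (hb0 _))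
        (fun p => (hFherm p.1).sub (hFherm p.2))
    have hsum_ab : ∑ p : Fin dA × Fin dA, a p.1 * b p.2 = t * t := by
      rw [Fintype.sum_prod_type]
      have : ∀ i : Fin dA, ∑ j, a i * b j = a i * t := by
        intro i; rw [← Finset.mul_sum, hsumb]
      rw [Finset.sum_congr rfl fun i _ => this i, ← Finset.sum_mul, htdef]
    set s : Finset (Fin dA × Fin dA) := Finset.univ.filter (fun p => 0 < a p.1 * b p.2)
      with hsdef
    have hsne : s.Nonempty := by
      by_contra h
      have hall : ∀ p : Fin dA × Fin dA, a p.1 * b p.2 = 0 := by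
        intro p
        by_contra hne0
        have hpos : 0 < a p.1 * b p.2 :=
          lt_of_le_of_ne (mul_nonneg (ha0 _) (hb0 _)) (Ne.symm hne0)
        exact h ⟨p, Finset.mem_filter.mpr ⟨Finset.mem_univ _, hpos⟩⟩
      have : (0 : ℝ) = t * t := by
        rw [← hsum_ab]
        exact (Finset.sum_eq_zero fun p _ => hall p).symm
      nlinarith
    obtain ⟨p₀, hp₀, hmax⟩ := Finset.exists_max_image s g hsne
    have hg0 : 0 ≤ g p₀ := Aux.traceNorm_nonneg _
    have hbound : ∑ p : Fin dA × Fin dA, (a p.1 * b p.2) * g p ≤ t * t * g p₀ := by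
      rw [← hsum_ab, Finset.sum_mul]
      refine Finset.sum_le_sum fun p _ => ?_
      rcases (mul_nonneg (ha0 p.1) (hb0 p.2)).lt_or_eq with hp | hp
      · exact mul_le_mul_of_nonneg_left
          (hmax p (Finset.mem_filter.mpr ⟨Finset.mem_univ _, hp⟩)) hp.le
      · rw [← hp]; simp
    have hfinal : traceNorm (Φ ρ - Φ σ) ≤ t * g p₀ := by
      have h1 : t * traceNorm (Φ ρ - Φ σ)
          = traceNorm (∑ p : Fin dA × Fin dA, ((a p.1 * b p.2 : ℝ) : ℂ) • (F p.1 - F p.2)) := by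
        rw [← hkey, Aux.traceNorm_smul _ htpos.le]
      have h2 : t * traceNorm (Φ ρ - Φ σ) ≤ t * (t * g p₀) := by
        rw [h1]
        refine hnorm2.trans (hbound.trans (le_of_eq ?_))
        ring
      exact le_of_mul_le_mul_left h2 htpos
    have hij : p₀.1 ≠ p₀.2 := by
      intro h
      have := (Finset.mem_filter.mp hp₀).2
      rw [h, hmulab p₀.2] at this
      exact lt_irrefl 0 this
    have horthuv : star (w p₀.1) ⬝ᵥ (w p₀.2) = 0 := by
      have h1 : star (w p₀.1) ⬝ᵥ (w p₀.2) = (Uᴴ * U) p₀.1 p₀.2 := by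
        rw [Matrix.mul_apply, dotProduct]
        exact Finset.sum_congr rfl fun k _ => by rw [Matrix.conjTranspose_apply]; rfl
      rw [h1, hU, Matrix.one_apply_ne hij]
    refine ⟨(1 / 2) * g p₀, ⟨w p₀.1, w p₀.2, hcol p₀.1, hcol p₀.2, horthuv, rfl⟩, ?_⟩
    rw [htdelta, div_le_iff₀ (by linarith)]
    calc traceNorm (Φ ρ - Φ σ) ≤ t * g p₀ := hfinal
      _ = 1 / 2 * g p₀ * (2 * t) := by ring
  -- conclude
  have hbdd0 : BddAbove S0 := ⟨1, fun r hr => hb r hr⟩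
  have hbdd1 : BddAbove S1 := hbdd0.mono h10
  have hbdd2 : BddAbove S2 := hbdd1.mono h21
  rcases Set.eq_empty_or_nonempty S0 with h0 | h0
  · have h1 : S1 = ∅ := Set.subset_empty_iff.mp (h0 ▸ h10)
    have h2 : S2 = ∅ := Set.subset_empty_iff.mp (h1 ▸ h21)
    rw [hEta, h0, h1, h2]
    exact ⟨rfl, rfl⟩
  · have h2ne : S2.Nonempty := by
      obtain ⟨r, hr⟩ := h0
      obtain ⟨r', hr', _⟩ := hup r hr
      exact ⟨r', hr'⟩
    have h1ne : S1.Nonempty := h2ne.mono h21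
    have e1 : sSup S0 ≤ sSup S2 := by
      refine csSup_le h0 fun r hr => ?_
      obtain ⟨r', hr', hle⟩ := hup r hr
      exact hle.trans (le_csSup hbdd2 hr')
    have e2 : sSup S2 ≤ sSup S1 := csSup_le_csSup hbdd1 h2ne h21
    have e3 : sSup S1 ≤ sSup S0 := csSup_le_csSup hbdd0 h1ne h10
    rw [hEta]
    exact ⟨le_antisymm (e1.trans e2) e3, le_antisymm e1 (e2.trans e3)⟩
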